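/- arXiv:2106.15140 — 6 statements merged into one kernel-verified Lean document; each statement's English description precedes it below -/
import Mathlib

section
/- Suppose z_j^{2N} ≠ 1 for pairwise distinct nonzero z_1,...,z_M, and let g_k := ω^k f̂_k = Σ_{j=1}^M a_j/(ω^{-k} - z_j) with a_j := γ_j(1 - z_j^{2N}) ≠ 0, where ω = e^{-2πi/(2N)}. For any partition S ∪ Γ = {0,...,2N-1} with |S| = M+1, the Loewner matrix L = ((g_ℓ - g_k)/(ω^{-ℓ} - ω^{-k}))_{ℓ∈Γ, k∈S} factorizes as L = C_Γ · diag(γ_j(z_j^{2N}-1)) · C_S^T, where C_Γ = (1/(ω^{-ℓ} - z_j))_{ℓ∈Γ, j} and C_S = (1/(ω^{-k} - z_j))_{k∈S, j} are Cauchy matrices. -/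
set_option maxHeartbeats 1000000

open Finset Matrix

private lemma loewner_aux (x y w a b : ℂ) (hx : x - w ≠ 0) (hy : y - w ≠ 0)
    (hxy : x - y ≠ 0) (hab : b = -a) :
    (a / (x - w) - a / (y - w)) / (x - y) = 1 / (x - w) * b * (1 / (y - w)) := by
  subst hab
  field_simp
  ring

theorem loewner_cauchy_factorization (M N : ℕ) (hMN : M < N)
    (γ z : Fin M → ℂ) (hγ : ∀ j, γ j ≠ 0) (hz0 : ∀ j, z j ≠ 0)
    (hzinj : Function.Injective z) (hz2N : ∀ j, z j ^ (2 * N) ≠ 1)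
    (ω : ℂ) (hω : ω = Complex.exp (-(2 * Real.pi * Complex.I) / (2 * (N : ℂ))))
    (f fhat g : ℕ → ℂ)
    (hf : ∀ k, f k = ∑ j, γ j * z j ^ k)
    (hfhat : ∀ m, fhat m = ∑ ℓ ∈ Finset.range (2 * N), f ℓ * ω ^ (m * ℓ))
    (hg : ∀ k, g k = ω ^ k * fhat k)
    (S Γ : Finset (Fin (2 * N))) (hdisj : Disjoint S Γ)
    (hunion : S ∪ Γ = Finset.univ) (hScard : S.card = M + 1)
    (L : Matrix ↥Γ ↥S ℂ)
    (hL : ∀ ℓ k, L ℓ k = (g ℓ.1.1 - g k.1.1) / (ω⁻¹ ^ ℓ.1.1 - ω⁻¹ ^ k.1.1))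
    (CΓ : Matrix ↥Γ (Fin M) ℂ) (hCΓ : ∀ ℓ j, CΓ ℓ j = 1 / (ω⁻¹ ^ ℓ.1.1 - z j))
    (CS : Matrix ↥S (Fin M) ℂ) (hCS : ∀ k j, CS k j = 1 / (ω⁻¹ ^ k.1.1 - z j)) :
    L = CΓ * Matrix.diagonal (fun j => γ j * (z j ^ (2 * N) - 1)) * CSᵀ := by
  have hN : 0 < N := Nat.lt_of_le_of_lt (Nat.zero_le M) hMN
  have h2N0 : (2 * N : ℕ) ≠ 0 := by positivity
  have hω0 : ω ≠ 0 := by rw [hω]; exact Complex.exp_ne_zero _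
  have hωpow : ω ^ (2 * N) = 1 := by
    rw [hω, ← Complex.exp_nat_mul]
    have hc : ((2 * N : ℕ) : ℂ) * (-(2 * Real.pi * Complex.I) / (2 * (N : ℂ)))
        = (-1 : ℤ) * (2 * Real.pi * Complex.I) := by
      have hNC : (N : ℂ) ≠ 0 := Nat.cast_ne_zero.mpr hN.ne'
      push_cast
      field_simp
    rw [hc]
    exact Complex.exp_int_mul_two_pi_mul_I (-1)
  have hζ : IsPrimitiveRoot ω⁻¹ (2 * N) := by
    have h1 : ω⁻¹ = Complex.exp (2 * Real.pi * Complex.I / ((2 * N : ℕ) : ℂ)) := by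
      rw [hω, neg_div, Complex.exp_neg, inv_inv]
      push_cast
      ring_nf
    rw [h1]
    exact Complex.isPrimitiveRoot_exp _ h2N0
  have hζ1 : ω⁻¹ ^ (2 * N) = 1 := hζ.pow_eq_one
  have hωn1 : ∀ n : ℕ, (ω ^ n) ^ (2 * N) = 1 := by
    intro n
    rw [← pow_mul ω n (2 * N), mul_comm n (2 * N), pow_mul ω (2 * N) n, hωpow, one_pow]
  have hζn1 : ∀ n : ℕ, (ω⁻¹ ^ n) ^ (2 * N) = 1 := by
    intro n
    rw [← pow_mul ω⁻¹ n (2 * N), mul_comm n (2 * N), pow_mul ω⁻¹ (2 * N) n, hζ1, one_pow]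
  -- denominators ω⁻¹ ^ n - z j are nonzero
  have hden : ∀ (n : ℕ) j, ω⁻¹ ^ n - z j ≠ 0 := by
    intro n j h
    apply hz2N j
    have hzj : z j = ω⁻¹ ^ n := by linear_combination -h
    rw [hzj, hζn1 n]
  have hzω : ∀ (j) (n : ℕ), z j * ω ^ n ≠ 1 := by
    intro j n h
    apply hz2N j
    have h1 : (z j * ω ^ n) ^ (2 * N) = 1 := by rw [h, one_pow]
    rwa [mul_pow, hωn1 n, mul_one] at h1
  -- the key formula for g
  have hgf : ∀ n : ℕ, g n = ∑ j, γ j * (1 - z j ^ (2 * N)) / (ω⁻¹ ^ n - z j) := by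
    intro n
    rw [hg n, hfhat n]
    simp only [hf, Finset.sum_mul]
    rw [Finset.sum_comm, Finset.mul_sum]
    refine Finset.sum_congr rfl fun j _ => ?_
    have hterm : ∀ ℓ ∈ Finset.range (2 * N),
        γ j * z j ^ ℓ * ω ^ (n * ℓ) = γ j * (z j * ω ^ n) ^ ℓ := by
      intro ℓ _
      rw [mul_pow, ← pow_mul]
      ring
    rw [Finset.sum_congr rfl hterm, ← Finset.mul_sum, geom_sum_eq (hzω j n)]
    have h1 : (z j * ω ^ n) ^ (2 * N) = z j ^ (2 * N) := by
      rw [mul_pow, hωn1 n, mul_one]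
    rw [h1, inv_pow]
    have hd2 : (ω ^ n)⁻¹ - z j ≠ 0 := by rw [← inv_pow]; exact hden n j
    have hun : ω ^ n ≠ 0 := pow_ne_zero _ hω0
    have hd1 : z j * ω ^ n - 1 ≠ 0 := sub_ne_zero.mpr (hzω j n)
    have hd3 : 1 - ω ^ n * z j ≠ 0 := fun h => hd1 (by linear_combination -h)
    field_simp
    rw [div_eq_iff (fun h => hd1 (by linear_combination h))]; ring
  -- main entrywise computation
  ext ℓ k
  have hne : (ℓ.1 : ℕ) ≠ (k.1 : ℕ) := by
    intro h
    have hh : ℓ.1 = k.1 := Fin.ext h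
    exact (Finset.disjoint_right.mp hdisj ℓ.2) (hh ▸ k.2)
  have hxy : ω⁻¹ ^ (ℓ.1 : ℕ) - ω⁻¹ ^ (k.1 : ℕ) ≠ 0 := by
    refine sub_ne_zero.mpr fun h => hne (hζ.pow_inj ℓ.1.2 k.1.2 h)
  have hRHS : (CΓ * Matrix.diagonal (fun j => γ j * (z j ^ (2 * N) - 1)) * CSᵀ) ℓ k
      = ∑ j, CΓ ℓ j * (γ j * (z j ^ (2 * N) - 1)) * CS k j := by
    rw [Matrix.mul_apply]
    refine Finset.sum_congr rfl fun j _ => ?_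
    rw [Matrix.mul_diagonal, Matrix.transpose_apply]
  rw [hRHS, hL, hgf, hgf, ← Finset.sum_sub_distrib, Finset.sum_div]
  refine Finset.sum_congr rfl fun j _ => ?_
  rw [hCΓ, hCS]
  have hd1 := hden (ℓ.1 : ℕ) j
  have hd2 := hden (k.1 : ℕ) j
  exact loewner_aux _ _ _ _ _ hd1 hd2 hxy (by ring)
end

section
/- Under the assumptions of the preceding factorization (z_j nonzero pairwise distinct with z_j^{2N} ≠ 1, γ_j ≠ 0, M < N, S ∪ Γ a partition of {0,...,2N-1} with |S| = M+1), the Loewner matrix L = ((ω^ℓ f̂_ℓ - ω^k f̂_k)/(ω^{-ℓ} - ω^{-k}))_{ℓ∈Γ, k∈S} of size (2N-M-1)×(M+1) has rank exactly M. -/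
open Finset Matrix

open Polynomial in
lemma cauchy_ker {M : ℕ} {z : Fin M → ℂ} (hzinj : Function.Injective z)
    {ι : Type*} [Fintype ι] {x : ι → ℂ} (hxinj : Function.Injective x)
    (hcard : M ≤ Fintype.card ι) (hne : ∀ j i, z j ≠ x i)
    (v : Fin M → ℂ) (hv : ∀ i, ∑ j, (z j - x i)⁻¹ * v j = 0) : v = 0 := by
  rcases Nat.eq_zero_or_pos M with rfl | hM
  · exact funext fun j => absurd j.isLt (by omega)
  set P : ℂ[X] := ∑ j, C (v j) * ∏ m ∈ Finset.univ.erase j, (C (z m) - X) with hP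
  have hdeg : P.natDegree < M := by
    refine lt_of_le_of_lt (Polynomial.natDegree_sum_le_of_forall_le _ _ fun j _ => ?_)
      (Nat.sub_lt hM one_pos : M - 1 < M)
    refine le_trans (natDegree_mul_le) ?_
    simp only [natDegree_C, zero_add]
    refine le_trans (Polynomial.natDegree_prod_le _ _) ?_
    refine le_trans (Finset.sum_le_card_nsmul _ _ 1 fun m _ => ?_) ?_
    · show natDegree (C (z m) - X) ≤ 1
      refine le_trans (natDegree_sub_le _ _) ?_
      simp
    · simp [Finset.card_erase_of_mem]
  have heval : ∀ i, P.eval (x i) = 0 := by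
    intro i
    have hQ : ∀ j : Fin M, (∏ m ∈ Finset.univ.erase j, (z m - x i))
        = (z j - x i)⁻¹ * ∏ m, (z m - x i) := by
      intro j
      rw [← Finset.mul_prod_erase Finset.univ _ (Finset.mem_univ j),
        inv_mul_cancel_left₀ (sub_ne_zero.mpr (hne j i))]
    simp only [hP, eval_finset_sum, eval_mul, eval_C, eval_prod, eval_sub, eval_X]
    calc ∑ j, v j * ∏ m ∈ Finset.univ.erase j, (z m - x i)
        = (∑ j, (z j - x i)⁻¹ * v j) * ∏ m, (z m - x i) := by
          rw [Finset.sum_mul]; refine Finset.sum_congr rfl fun j _ => ?_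
          rw [hQ j]; ring
      _ = 0 := by rw [hv i, zero_mul]
  have hP0 : P = 0 :=
    Polynomial.eq_zero_of_natDegree_lt_card_of_eval_eq_zero P hxinj heval
      (hdeg.trans_le hcard)
  funext j
  have hev := congrArg (Polynomial.eval (z j)) hP0
  simp only [hP, eval_finset_sum, eval_mul, eval_C, eval_prod, eval_sub, eval_X,
    Polynomial.eval_zero] at hev
  rw [Finset.sum_eq_single j (fun j' _ hj' => ?_) (by simp)] at hev
  · have hprod : (∏ m ∈ Finset.univ.erase j, (z m - z j)) ≠ 0 := by
      refine Finset.prod_ne_zero_iff.mpr fun m hm => sub_ne_zero.mpr fun h => ?_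
      exact (Finset.mem_erase.mp hm).1 (hzinj h)
    exact (mul_eq_zero.mp hev).resolve_right hprod
  · rw [Finset.prod_eq_zero (Finset.mem_erase.mpr ⟨Ne.symm hj', Finset.mem_univ j⟩)
      (sub_self (z j)), mul_zero]

lemma loewner_entry_aux (a zj u v : ℂ) (h1 : zj - u ≠ 0) (h2 : zj - v ≠ 0)
    (h3 : u - v ≠ 0) :
    (a * (zj - u)⁻¹ - a * (zj - v)⁻¹) / (u - v) = a * ((zj - u)⁻¹ * (zj - v)⁻¹) := by
  field_simp
  ring

lemma g_term_aux (c zj w Z : ℂ) (hw : w ≠ 0) (h1 : zj * w - 1 ≠ 0) :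
    w * c * ((Z - 1) / (zj * w - 1)) = c * (Z - 1) * (zj - w⁻¹)⁻¹ := by
  have h2 : zj - w⁻¹ ≠ 0 := by
    have he : zj - w⁻¹ = (zj * w - 1) * w⁻¹ := by field_simp
    rw [he]
    exact mul_ne_zero h1 (inv_ne_zero hw)
  field_simp

theorem loewner_rank (M N : ℕ) (hMN : M < N)
    (γ z : Fin M → ℂ) (hγ : ∀ j, γ j ≠ 0) (hz0 : ∀ j, z j ≠ 0)
    (hzinj : Function.Injective z) (hz2N : ∀ j, z j ^ (2 * N) ≠ 1)
    (ω : ℂ) (hω : ω = Complex.exp (-(2 * Real.pi * Complex.I) / (2 * (N : ℂ))))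
    (f fhat g : ℕ → ℂ)
    (hf : ∀ k, f k = ∑ j, γ j * z j ^ k)
    (hfhat : ∀ m, fhat m = ∑ ℓ ∈ Finset.range (2 * N), f ℓ * ω ^ (m * ℓ))
    (hg : ∀ k, g k = ω ^ k * fhat k)
    (S Γ : Finset (Fin (2 * N))) (hdisj : Disjoint S Γ)
    (hunion : S ∪ Γ = Finset.univ) (hScard : S.card = M + 1)
    (L : Matrix ↥Γ ↥S ℂ)
    (hL : ∀ ℓ k, L ℓ k = (g ℓ.1.1 - g k.1.1) / (ω⁻¹ ^ ℓ.1.1 - ω⁻¹ ^ k.1.1)) :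
    L.rank = M := by
  classical
  -- primitive root facts
  have hprim : IsPrimitiveRoot ω⁻¹ (2 * N) := by
    have h := Complex.isPrimitiveRoot_exp (2 * N) (by omega)
    have he : ω⁻¹ = Complex.exp (2 * Real.pi * Complex.I / ((2 * N : ℕ) : ℂ)) := by
      rw [hω, ← Complex.exp_neg]
      congr 1
      push_cast
      ring
    rwa [he]
  have hω0 : ω ≠ 0 := hω ▸ Complex.exp_ne_zero _
  have hωinv_pow : ω⁻¹ ^ (2 * N) = 1 := hprim.pow_eq_one
  have hωpow : ω ^ (2 * N) = 1 := by
    rw [← inv_inv ω, inv_pow, hωinv_pow, inv_one]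
  have hzne : ∀ (j : Fin M) (k : ℕ), z j ≠ ω⁻¹ ^ k := by
    intro j k h
    apply hz2N j
    rw [h, ← pow_mul, mul_comm, pow_mul, hωinv_pow, one_pow]
  -- residues
  set a : Fin M → ℂ := fun j => γ j * (z j ^ (2 * N) - 1) with ha
  have ha0 : ∀ j, a j ≠ 0 := fun j =>
    mul_ne_zero (hγ j) (sub_ne_zero.mpr (hz2N j))
  -- barycentric form of g
  have hg' : ∀ k : ℕ, g k = ∑ j, a j * (z j - ω⁻¹ ^ k)⁻¹ := by
    intro k
    have hzω : ∀ j, z j * ω ^ k ≠ 1 := by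
      intro j h
      apply hz2N j
      have h2 : (z j * ω ^ k) ^ (2 * N) = 1 := by rw [h, one_pow]
      rwa [mul_pow, ← pow_mul ω k (2 * N), mul_comm k (2 * N), pow_mul ω (2 * N) k, hωpow, one_pow, mul_one] at h2
    rw [hg, hfhat]
    simp_rw [hf, Finset.sum_mul, Finset.mul_sum]
    rw [Finset.sum_comm]
    refine Finset.sum_congr rfl fun j _ => ?_
    have hgeom : ∑ ℓ ∈ Finset.range (2 * N), (z j * ω ^ k) ^ ℓ
        = (z j ^ (2 * N) - 1) / (z j * ω ^ k - 1) := by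
      rw [geom_sum_eq (hzω j)]
      congr 2
      rw [mul_pow, ← pow_mul ω k (2 * N), mul_comm k (2 * N), pow_mul ω (2 * N) k, hωpow, one_pow, mul_one]
    have hsum : ∑ ℓ ∈ Finset.range (2 * N), ω ^ k * (γ j * z j ^ ℓ * ω ^ (k * ℓ))
        = ω ^ k * γ j * ((z j ^ (2 * N) - 1) / (z j * ω ^ k - 1)) := by
      rw [← hgeom, Finset.mul_sum]
      refine Finset.sum_congr rfl fun ℓ _ => ?_
      rw [mul_pow, ← pow_mul]
      ring
    rw [hsum, ha, inv_pow]
    exact g_term_aux (γ j) (z j) (ω ^ k) (z j ^ (2 * N))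
      (pow_ne_zero k hω0) (sub_ne_zero.mpr (hzω j))
  -- entrywise factorized form of L
  have hLent : ∀ (ℓ : ↥Γ) (k : ↥S), L ℓ k
      = ∑ j, a j * ((z j - ω⁻¹ ^ (ℓ.1.1 : ℕ))⁻¹ * (z j - ω⁻¹ ^ (k.1.1 : ℕ))⁻¹) := by
    intro ℓ k
    have hneq : ℓ.1.1 ≠ k.1.1 := by
      intro h
      have : ℓ.1 = k.1 := Fin.ext h
      exact (Finset.disjoint_left.mp hdisj (this ▸ k.2) ℓ.2)
    have hnode : ω⁻¹ ^ (ℓ.1.1 : ℕ) ≠ ω⁻¹ ^ (k.1.1 : ℕ) := fun h =>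
      hneq (hprim.pow_inj ℓ.1.isLt k.1.isLt h)
    have h3 : ω⁻¹ ^ (ℓ.1.1 : ℕ) - ω⁻¹ ^ (k.1.1 : ℕ) ≠ 0 := sub_ne_zero.mpr hnode
    rw [hL, hg', hg', ← Finset.sum_sub_distrib, Finset.sum_div]
    refine Finset.sum_congr rfl fun j _ => ?_
    exact loewner_entry_aux (a j) (z j) _ _ (sub_ne_zero.mpr (hzne j _))
      (sub_ne_zero.mpr (hzne j _)) h3
  -- the factorization L = A * (D * Bᵀ)
  set A : Matrix ↥Γ (Fin M) ℂ := fun ℓ j => (z j - ω⁻¹ ^ (ℓ.1.1 : ℕ))⁻¹ with hA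
  set B : Matrix ↥S (Fin M) ℂ := fun k j => (z j - ω⁻¹ ^ (k.1.1 : ℕ))⁻¹ with hB
  set D : Matrix (Fin M) (Fin M) ℂ := Matrix.diagonal a with hD
  have hfact : L = A * (D * Bᵀ) := by
    ext ℓ k
    rw [hLent, Matrix.mul_apply]
    refine Finset.sum_congr rfl fun j _ => ?_
    rw [hD, Matrix.diagonal_mul]
    rw [Matrix.transpose_apply]
    simp only [hA, hB, Matrix.transpose_apply]
    ring
  -- cardinalities
  have hcards : S.card + Γ.card = 2 * N := by
    rw [← Finset.card_union_of_disjoint hdisj, hunion, Finset.card_univ, Fintype.card_fin]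
  have hΓcard : M ≤ Fintype.card ↥Γ := by
    rw [Fintype.card_coe]; omega
  have hScard' : M ≤ Fintype.card ↥S := by
    rw [Fintype.card_coe]; omega
  -- injectivity of the Cauchy factors
  have hnodeΓ : Function.Injective (fun ℓ : ↥Γ => (ω⁻¹ : ℂ) ^ (ℓ.1.1 : ℕ)) := by
    intro p q h
    exact Subtype.ext (Fin.ext (hprim.pow_inj p.1.isLt q.1.isLt h))
  have hnodeS : Function.Injective (fun k : ↥S => (ω⁻¹ : ℂ) ^ (k.1.1 : ℕ)) := by
    intro p q h
    exact Subtype.ext (Fin.ext (hprim.pow_inj p.1.isLt q.1.isLt h))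
  have hAker : ∀ v, A.mulVecLin v = 0 → v = 0 := by
    intro v hv
    refine cauchy_ker hzinj hnodeΓ hΓcard (fun j i => hzne j _) v fun i => ?_
    have := congrFun hv i
    rw [Matrix.mulVecLin_apply] at this
    simpa [Matrix.mulVecLin_apply, Matrix.mulVec, dotProduct, hA] using this
  have hBker : ∀ v, B.mulVecLin v = 0 → v = 0 := by
    intro v hv
    refine cauchy_ker hzinj hnodeS hScard' (fun j i => hzne j _) v fun i => ?_
    have := congrFun hv i
    rw [Matrix.mulVecLin_apply] at this
    simpa [Matrix.mulVecLin_apply, Matrix.mulVec, dotProduct, hB] using this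
  have hAinj : Function.Injective A.mulVecLin := by
    rw [← LinearMap.ker_eq_bot]
    exact LinearMap.ker_eq_bot'.mpr hAker
  -- rank computation
  rw [hfact]
  have h1 : (A * (D * Bᵀ)).rank = (D * Bᵀ).rank := by
    rw [Matrix.rank, Matrix.rank, Matrix.mulVecLin_mul, LinearMap.range_comp]
    exact ((Submodule.equivMapOfInjective _ hAinj _).finrank_eq).symm
  have h2 : (D * Bᵀ).rank = Bᵀ.rank := by
    refine Matrix.rank_mul_eq_right_of_isUnit_det D Bᵀ ?_
    rw [hD, Matrix.det_diagonal]
    exact isUnit_iff_ne_zero.mpr (Finset.prod_ne_zero_iff.mpr fun j _ => ha0 j)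
  have h4 : B.rank = M := by
    have hrn := LinearMap.finrank_range_add_finrank_ker B.mulVecLin
    rw [LinearMap.ker_eq_bot'.mpr hBker, finrank_bot, add_zero] at hrn
    rw [Matrix.rank, hrn]
    simp [Module.finrank_pi]
  rw [h1, h2, Matrix.rank_transpose, h4]
end

section
/- With notation as above (Loewner matrix L of rank M, size (2N-M-1)×(M+1)), any nonzero kernel vector w of L satisfies C_S^T w = 0 where C_S = (1/(ω^{-k} - z_j))_{j=1..M, k∈S} is the M×(M+1) Cauchy matrix, and every component of w is nonzero. -/
open Finset Matrix Polynomial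

lemma cauchy_key {ι : Type*} [DecidableEq ι] (A : Finset ι) (p : ι → ℂ)
    (hp : Set.InjOn p A) (T : Finset ℂ) (hT : A.card ≤ T.card)
    (hTp : ∀ t ∈ T, ∀ i ∈ A, t - p i ≠ 0)
    (v : ι → ℂ) (hv : ∀ t ∈ T, ∑ i ∈ A, v i / (t - p i) = 0) :
    ∀ i ∈ A, v i = 0 := by
  rcases A.eq_empty_or_nonempty with rfl | hA
  · simp
  set P : Polynomial ℂ :=
    ∑ i ∈ A, Polynomial.C (v i) * ∏ k ∈ A.erase i, (X - Polynomial.C (p k)) with hP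
  have hevalP : ∀ t, P.eval t = ∑ i ∈ A, v i * ∏ k ∈ A.erase i, (t - p k) := by
    intro t
    simp [hP, Polynomial.eval_finset_sum, Polynomial.eval_prod]
  have hevalT : ∀ t ∈ T, P.eval t = 0 := by
    intro t ht
    have key : P.eval t = (∑ i ∈ A, v i / (t - p i)) * ∏ k ∈ A, (t - p k) := by
      rw [Finset.sum_mul, hevalP]
      refine Finset.sum_congr rfl fun i hi => ?_
      rw [← Finset.mul_prod_erase A _ hi, ← mul_assoc, div_mul_cancel₀ _ (hTp t ht i hi)]
    rw [key, hv t ht, zero_mul]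
  have hdeg : P.natDegree < A.card := by
    have h1 : P.natDegree ≤ A.card - 1 := by
      apply Polynomial.natDegree_sum_le_of_forall_le
      intro i hi
      calc (Polynomial.C (v i) * ∏ k ∈ A.erase i, (X - Polynomial.C (p k))).natDegree
          ≤ (∏ k ∈ A.erase i, (X - Polynomial.C (p k))).natDegree :=
            natDegree_C_mul_le _ _
        _ ≤ ∑ k ∈ A.erase i, (X - Polynomial.C (p k)).natDegree := natDegree_prod_le _ _
        _ = (A.erase i).card := by simp [natDegree_X_sub_C]
        _ ≤ A.card - 1 := by rw [Finset.card_erase_of_mem hi]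
    have h2 : 1 ≤ A.card := Finset.card_pos.mpr hA
    omega
  have hP0 : P = 0 :=
    eq_zero_of_natDegree_lt_card_of_eval_eq_zero' P T hevalT (lt_of_lt_of_le hdeg hT)
  intro i hi
  have h1 : (0:ℂ) = ∑ i' ∈ A, v i' * ∏ k ∈ A.erase i', (p i - p k) := by
    rw [← hevalP, hP0, Polynomial.eval_zero]
  rw [Finset.sum_eq_single i (fun b hb hbi => by
      refine mul_eq_zero_of_right _ (Finset.prod_eq_zero
        (Finset.mem_erase.mpr ⟨fun h => hbi (h ▸ rfl), hi⟩) (sub_self _))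
    ) (fun h => absurd hi h)] at h1
  have hprod : ∏ k ∈ A.erase i, (p i - p k) ≠ 0 := by
    apply Finset.prod_ne_zero_iff.mpr
    intro k hk
    exact sub_ne_zero_of_ne fun h =>
      (Finset.ne_of_mem_erase hk) (hp hi (Finset.mem_of_mem_erase hk) h).symm
  exact (mul_eq_zero.mp h1.symm).resolve_right hprod

theorem loewner_kernel_vector (M N : ℕ) (hMN : M < N)
    (γ z : Fin M → ℂ) (hγ : ∀ j, γ j ≠ 0) (hz0 : ∀ j, z j ≠ 0)
    (hzinj : Function.Injective z) (hz2N : ∀ j, z j ^ (2 * N) ≠ 1)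
    (ω : ℂ) (hω : ω = Complex.exp (-(2 * Real.pi * Complex.I) / (2 * (N : ℂ))))
    (f fhat g : ℕ → ℂ)
    (hf : ∀ k, f k = ∑ j, γ j * z j ^ k)
    (hfhat : ∀ m, fhat m = ∑ ℓ ∈ Finset.range (2 * N), f ℓ * ω ^ (m * ℓ))
    (hg : ∀ k, g k = ω ^ k * fhat k)
    (S Γ : Finset (Fin (2 * N))) (hdisj : Disjoint S Γ)
    (hunion : S ∪ Γ = Finset.univ) (hScard : S.card = M + 1)
    (L : Matrix ↥Γ ↥S ℂ)
    (hL : ∀ ℓ k, L ℓ k = (g ℓ.1.1 - g k.1.1) / (ω⁻¹ ^ ℓ.1.1 - ω⁻¹ ^ k.1.1))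
    (Cs : Matrix (Fin M) ↥S ℂ) (hCs : ∀ j k, Cs j k = 1 / (ω⁻¹ ^ k.1.1 - z j))
    (w : ↥S → ℂ) (hw : L.mulVec w = 0) (hw0 : w ≠ 0) :
    Cs.mulVec w = 0 ∧ ∀ k, w k ≠ 0 := by
  classical
  -- the primitive 2N-th root of unity ζ = ω⁻¹
  set ζ : ℂ := Complex.exp (2 * Real.pi * Complex.I / (2 * (N:ℂ))) with hζdef
  have hprim : IsPrimitiveRoot ζ (2 * N) := by
    have h := Complex.isPrimitiveRoot_exp (2 * N) (by omega)
    rw [hζdef]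
    convert h using 3
    push_cast
    ring
  have hζ0 : ζ ≠ 0 := Complex.exp_ne_zero _
  have hωζ : ω⁻¹ = ζ := by
    rw [hω, hζdef, ← Complex.exp_neg]
    congr 1
    ring
  have hωval : ω = ζ⁻¹ := by rw [← hωζ, inv_inv]
  have hω0 : ω ≠ 0 := by rw [hω]; exact Complex.exp_ne_zero _
  have hζ2N : ζ ^ (2 * N) = 1 := hprim.pow_eq_one
  have hx1 : ∀ k : ℕ, (ζ ^ k) ^ (2 * N) = 1 := by
    intro k
    rw [← pow_mul, mul_comm k, pow_mul, hζ2N, one_pow]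
  have hxz : ∀ (k : ℕ) (j : Fin M), ζ ^ k - z j ≠ 0 := by
    intro k j h
    exact hz2N j (by rw [← sub_eq_zero.mp h]; exact hx1 k)
  have hxinj : ∀ a b : Fin (2 * N), ζ ^ (a : ℕ) = ζ ^ (b : ℕ) → a = b := by
    intro a b h
    exact Fin.ext (hprim.pow_inj a.2 b.2 h)
  have hinv : ∀ m : ℕ, ω ^ m * ζ ^ m = 1 := by
    intro m
    rw [hωval, ← mul_pow, inv_mul_cancel₀ hζ0, one_pow]
  set d : Fin M → ℂ := fun j => γ j * (z j ^ (2 * N) - 1) with hd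
  have hd0 : ∀ j, d j ≠ 0 := fun j => mul_ne_zero (hγ j) (sub_ne_zero.mpr (hz2N j))
  have hr1 : ∀ (m : ℕ) (j : Fin M), z j * ω ^ m ≠ 1 := by
    intro m j h
    apply hxz m j
    have : z j * (ω ^ m * ζ ^ m) = ζ ^ m := by rw [← mul_assoc, h, one_mul]
    rw [hinv m, mul_one] at this
    rw [this, sub_self]
  have hr1' : ∀ (m : ℕ) (j : Fin M), z j * ω ^ m - 1 ≠ 0 :=
    fun m j => sub_ne_zero.mpr (hr1 m j)
  -- closed form of fhat
  have hfhat' : ∀ m : ℕ, fhat m = ∑ j, d j / (z j * ω ^ m - 1) := by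
    intro m
    rw [hfhat]
    simp only [hf, Finset.sum_mul]
    rw [Finset.sum_comm]
    refine Finset.sum_congr rfl fun j _ => ?_
    calc ∑ ℓ ∈ Finset.range (2 * N), γ j * z j ^ ℓ * ω ^ (m * ℓ)
        = γ j * ∑ ℓ ∈ Finset.range (2 * N), (z j * ω ^ m) ^ ℓ := by
          rw [Finset.mul_sum]
          refine Finset.sum_congr rfl fun ℓ _ => ?_
          rw [mul_pow, ← pow_mul]
          ring
      _ = γ j * (((z j * ω ^ m) ^ (2 * N) - 1) / (z j * ω ^ m - 1)) := by
          rw [geom_sum_eq (hr1 m j) (2 * N)]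
      _ = d j / (z j * ω ^ m - 1) := by
          have hω2N : ω ^ (2*N) = 1 := by rw [hωval, inv_pow, hζ2N, inv_one]
          have hzp : (z j * ω ^ m) ^ (2*N) = z j ^ (2*N) := by
            rw [mul_pow, show ((ω:ℂ)^m)^(2*N) = (ω^(2*N))^m by
              rw [← pow_mul, ← pow_mul, mul_comm], hω2N, one_pow, mul_one]
          rw [hzp, hd, mul_div_assoc]
  -- closed form of g
  have hg' : ∀ m : ℕ, g m = ∑ j, -(d j / (ζ ^ m - z j)) := by
    intro m
    rw [hg, hfhat' m, Finset.mul_sum]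
    refine Finset.sum_congr rfl fun j _ => ?_
    have h1 := hr1' m j
    have h2 := hxz m j
    have h3 : z j * ω ^ m - 1 = -(ω ^ m * (ζ ^ m - z j)) := by linear_combination hinv m
    have ha : ω ^ m ≠ 0 := pow_ne_zero _ hω0
    rw [h3, div_neg, mul_neg, ← mul_div_assoc, mul_div_mul_left _ _ ha]
  -- Loewner matrix entries in Cauchy product form
  have hL' : ∀ (ℓ : ↥Γ) (k : ↥S),
      L ℓ k = ∑ j, d j / ((ζ ^ (ℓ.1.1) - z j) * (ζ ^ (k.1.1) - z j)) := by
    intro ℓ k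
    have hne : ζ ^ (ℓ.1.1) - ζ ^ (k.1.1) ≠ 0 := by
      refine sub_ne_zero.mpr fun h => ?_
      have h2 := hxinj ℓ.1 k.1 h
      exact (Finset.disjoint_right.mp hdisj ℓ.2) (h2 ▸ k.2)
    rw [hL, hωζ, hg', hg', ← Finset.sum_sub_distrib, Finset.sum_div]
    refine Finset.sum_congr rfl fun j _ => ?_
    have h1 := hxz (ℓ.1.1) j
    have h2 := hxz (k.1.1) j
    field_simp
    ring
  -- Cs.mulVec in explicit form
  have hCsw : ∀ j, (Cs.mulVec w) j = ∑ k : ↥S, w k / (ζ ^ (k.1.1) - z j) := by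
    intro j
    simp only [Matrix.mulVec, dotProduct, hCs, hωζ]
    refine Finset.sum_congr rfl fun k _ => ?_
    rw [one_div, inv_mul_eq_div]
  -- the kernel equations
  have hker : ∀ ℓ : ↥Γ, ∑ j, (d j * (Cs.mulVec w) j) / (ζ ^ (ℓ.1.1) - z j) = 0 := by
    intro ℓ
    have h0 : ∑ k : ↥S, L ℓ k * w k = 0 := by
      have h := congrFun hw ℓ
      simpa [Matrix.mulVec, dotProduct] using h
    calc ∑ j, (d j * (Cs.mulVec w) j) / (ζ ^ (ℓ.1.1) - z j)
        = ∑ j, ∑ k : ↥S, d j / ((ζ ^ (ℓ.1.1) - z j) * (ζ ^ (k.1.1) - z j)) * w k := by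
          refine Finset.sum_congr rfl fun j _ => ?_
          rw [hCsw, Finset.mul_sum, Finset.sum_div]
          refine Finset.sum_congr rfl fun k _ => ?_
          rw [← mul_div_assoc, div_div, div_mul_eq_mul_div,
            mul_comm (ζ ^ (k.1.1) - z j) (ζ ^ (ℓ.1.1) - z j)]
      _ = ∑ k : ↥S, ∑ j, d j / ((ζ ^ (ℓ.1.1) - z j) * (ζ ^ (k.1.1) - z j)) * w k :=
          Finset.sum_comm
      _ = ∑ k : ↥S, L ℓ k * w k := by
          refine Finset.sum_congr rfl fun k _ => ?_
          rw [hL', Finset.sum_mul]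
      _ = 0 := h0
  -- cardinalities
  have hcards : 2 * N = S.card + Γ.card := by
    rw [← Finset.card_union_of_disjoint hdisj, hunion, Finset.card_univ, Fintype.card_fin]
  -- first application of the key lemma
  have key1 := cauchy_key (Finset.univ : Finset (Fin M)) z (hzinj.injOn)
      (Γ.image (fun ℓ : Fin (2*N) => ζ ^ (ℓ : ℕ)))
      (by
        rw [Finset.card_image_of_injOn (fun a _ b _ h => hxinj a b h),
          Finset.card_univ, Fintype.card_fin]
        omega)
      (by
        intro t ht j _
        obtain ⟨ℓ, _, rfl⟩ := Finset.mem_image.mp ht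
        exact hxz ℓ j)
      (fun j => d j * (Cs.mulVec w) j)
      (by
        intro t ht
        obtain ⟨ℓ, hℓ, rfl⟩ := Finset.mem_image.mp ht
        exact hker ⟨ℓ, hℓ⟩)
  have hCsw0 : Cs.mulVec w = 0 := by
    funext j
    have h := key1 j (Finset.mem_univ j)
    exact (mul_eq_zero.mp h).resolve_left (hd0 j)
  refine ⟨hCsw0, ?_⟩
  -- second part: all components are nonzero
  intro k0 hk0
  apply hw0
  set W : Fin (2*N) → ℂ := fun k => if h : k ∈ S then w ⟨k, h⟩ else 0 with hW
  have hsum : ∀ j, ∑ k ∈ S.erase k0.1, W k / (ζ ^ (k : ℕ) - z j) = 0 := by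
    intro j
    have h1 : ∑ k ∈ S, W k / (ζ ^ (k : ℕ) - z j) = 0 := by
      have h2 := congrFun hCsw0 j
      rw [hCsw] at h2
      simp only [Pi.zero_apply] at h2
      rw [← Finset.sum_coe_sort S (fun k => W k / (ζ ^ (k : ℕ) - z j))]
      rw [← h2]
      refine Finset.sum_congr rfl fun k _ => ?_
      simp [hW, k.2]
    have h3 : W k0.1 / (ζ ^ (k0.1 : ℕ) - z j) = 0 := by
      have : W k0.1 = 0 := by simp [hW, k0.2, hk0]
      rw [this, zero_div]
    rw [← Finset.sum_erase_add S _ k0.2, h3, add_zero] at h1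
    exact h1
  have key2 := cauchy_key (S.erase k0.1) (fun k : Fin (2*N) => ζ ^ (k : ℕ))
      (fun a _ b _ h => hxinj a b h)
      (Finset.univ.image z)
      (by
        rw [Finset.card_image_of_injective _ hzinj, Finset.card_univ, Fintype.card_fin,
          Finset.card_erase_of_mem k0.2, hScard]
        omega)
      (by
        intro t ht i _
        obtain ⟨j, _, rfl⟩ := Finset.mem_image.mp ht
        intro h
        exact hxz i j (sub_eq_zero.mpr (sub_eq_zero.mp h).symm))
      W
      (by
        intro t ht
        obtain ⟨j, _, rfl⟩ := Finset.mem_image.mp ht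
        calc ∑ i ∈ S.erase k0.1, W i / (z j - ζ ^ (i : ℕ))
            = ∑ i ∈ S.erase k0.1, -(W i / (ζ ^ (i : ℕ) - z j)) := by
              refine Finset.sum_congr rfl fun i _ => ?_
              rw [← neg_sub, div_neg]
          _ = 0 := by rw [Finset.sum_neg_distrib, hsum j, neg_zero])
  funext k
  show w k = 0
  by_cases hk : k = k0
  · rw [hk, hk0]
  · have hkm : k.1 ∈ S.erase k0.1 :=
      Finset.mem_erase.mpr ⟨fun h => hk (Subtype.ext h), k.2⟩
    have h := key2 k.1 hkm
    simpa [hW, k.2] using h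
end

section
/- Let f_k = Σ_{j=1}^M γ_j z_j^k (z_j nonzero, pairwise distinct, γ_j ≠ 0, M < N), f̂ its length-2N DFT, S ∪ Γ a partition of {0,...,2N-1} with |S| = M+1, u⁽¹⁾ = (ω^{-ℓ})_{ℓ∈Γ}, u⁽²⁾ = (ω^{-k})_{k∈S}. Then the Loewner matrix L = ((ω^ℓ f̂_ℓ - ω^k f̂_k)/(ω^{-ℓ} - ω^{-k}))_{ℓ∈Γ,k∈S} satisfies L = Q_{2N-M-1,2N-M}(u⁽¹⁾) · H_{2N-M,M+1} · Q_{M+1,M+1}(u⁽²⁾)^T, where H_{2N-M,M+1} = (f_{ℓ+k})_{ℓ=0..2N-M-1, k=0..M}; consequently rank L = rank H = M. (No assumption z_j^{2N} ≠ 1 is needed.) -/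
open Finset Matrix Polynomial

lemma eval_fin_sum {n : ℕ} (p : ℂ[X]) (h : p.natDegree < n) (x : ℂ) :
    ∑ r : Fin n, p.coeff r * x ^ (r : ℕ) = p.eval x := by
  rw [Fin.sum_univ_eq_sum_range (fun r => p.coeff r * x ^ r), Polynomial.eval_eq_sum_range' h]

lemma prod_subtype_erase {ι M : Type*} [DecidableEq ι] [CommMonoid M]
    (T : Finset ι) (ℓ : ↥T) (g : ι → M) :
    ∏ n ∈ (Finset.univ : Finset ↥T).erase ℓ, g n.1 = ∏ n ∈ T.erase ℓ.1, g n := by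
  apply Finset.prod_bij (fun (n : ↥T) _ => (n : ι))
  · intro a ha
    rw [Finset.mem_erase] at ha ⊢
    exact ⟨fun h => ha.1 (Subtype.ext h), a.2⟩
  · intro a _ b _ h; exact Subtype.ext h
  · intro b hb
    rw [Finset.mem_erase] at hb
    exact ⟨⟨b, hb.2⟩, by simp [Finset.mem_erase, Subtype.ext_iff, hb.1], rfl⟩
  · intros; rfl

lemma natDegree_prod_X_sub_C' {ι : Type*} (s : Finset ι) (v : ι → ℂ) :
    (∏ n ∈ s, (X - C (v n))).natDegree = s.card := by
  rw [Polynomial.natDegree_prod _ _ (fun n _ => Polynomial.X_sub_C_ne_zero (v n))]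
  simp [Polynomial.natDegree_X_sub_C]

lemma mem_span_monomials {n : ℕ} (q : ℂ[X]) (hq : q.natDegree < n) :
    q ∈ Submodule.span ℂ (Set.range (fun r : Fin n => (X : ℂ[X]) ^ (r : ℕ))) := by
  nth_rewrite 1 [q.as_sum_range' n hq]
  apply Submodule.sum_mem
  intro r hr
  rw [Finset.mem_range] at hr
  rw [← Polynomial.C_mul_X_pow_eq_monomial, Polynomial.C_mul']
  exact Submodule.smul_mem _ _ (Submodule.subset_span ⟨⟨r, hr⟩, rfl⟩)

lemma mem_span_prod_erase {ι : Type*} [DecidableEq ι] (s : Finset ι) (v : ι → ℂ)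
    (hv : Set.InjOn v s) (q : ℂ[X]) (hq : q.degree < s.card) :
    q ∈ Submodule.span ℂ
      (Set.range (fun ℓ : ↥s => ∏ n ∈ s.erase ℓ.1, (X - C (v n)))) := by
  nth_rewrite 1 [Lagrange.eq_interpolate hv hq]
  rw [Lagrange.interpolate_apply]
  apply Submodule.sum_mem
  intro i hi
  have hbasis : Lagrange.basis s v i
      = C (∏ n ∈ s.erase i, (v i - v n)⁻¹) * ∏ n ∈ s.erase i, (X - C (v n)) := by
    rw [Lagrange.basis, map_prod, ← Finset.prod_mul_distrib]
    rfl
  rw [hbasis, ← mul_assoc, ← Polynomial.C_mul, Polynomial.C_mul']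
  exact Submodule.smul_mem _ _ (Submodule.subset_span ⟨⟨i, hi⟩, rfl⟩)

lemma mulVecLin_injective_of_eval {M : ℕ} {m : Type*} [Fintype m]
    (p : m → ℂ[X]) (z : Fin M → ℂ) (hz : Function.Injective z)
    (A : Matrix m (Fin M) ℂ) (hA : ∀ i j, A i j = (p i).eval (z j))
    (hspan : ∀ i : Fin M,
      (∏ j ∈ Finset.univ.erase i, (X - C (z j))) ∈ Submodule.span ℂ (Set.range p)) :
    Function.Injective A.mulVecLin := by
  rw [← LinearMap.ker_eq_bot, LinearMap.ker_eq_bot']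
  intro c hc
  have hφ : ∀ q ∈ Submodule.span ℂ (Set.range p), ∑ j, c j * q.eval (z j) = 0 := by
    intro q hq
    have hle : Submodule.span ℂ (Set.range p)
        ≤ LinearMap.ker (∑ j, c j • (Polynomial.leval (z j))) := by
      rw [Submodule.span_le]
      rintro _ ⟨i, rfl⟩
      have h0 := congrFun hc i
      simp only [Matrix.mulVecLin_apply, Matrix.mulVec, dotProduct, hA, Pi.zero_apply] at h0
      simp only [SetLike.mem_coe, LinearMap.mem_ker, LinearMap.sum_apply, LinearMap.smul_apply,
        Polynomial.leval_apply, smul_eq_mul]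
      rw [← h0]
      exact Finset.sum_congr rfl fun j _ => mul_comm _ _
    have := hle hq
    simpa only [LinearMap.mem_ker, LinearMap.sum_apply, LinearMap.smul_apply,
      Polynomial.leval_apply, smul_eq_mul] using this
  funext i
  have h := hφ _ (hspan i)
  rw [Finset.sum_eq_single_of_mem i (Finset.mem_univ i)] at h
  · have hne : (∏ j ∈ Finset.univ.erase i, (X - C (z j))).eval (z i)
        = ∏ j ∈ Finset.univ.erase i, (z i - z j) := by
      rw [Polynomial.eval_prod]; simp
    rw [hne] at h
    have hprodne : (∏ j ∈ Finset.univ.erase i, (z i - z j)) ≠ 0 := by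
      apply Finset.prod_ne_zero_iff.2
      intro j hj
      rw [Finset.mem_erase] at hj
      exact sub_ne_zero.2 fun he => hj.1 (hz he).symm
    have := mul_eq_zero.1 h
    simpa [hprodne] using this
  · intro j _ hj
    have : (∏ j' ∈ Finset.univ.erase i, (X - C (z j'))).eval (z j) = 0 := by
      rw [Polynomial.eval_prod]
      apply Finset.prod_eq_zero (Finset.mem_erase.2 ⟨hj, Finset.mem_univ j⟩)
      simp
    rw [this, mul_zero]

lemma surj_transpose {M : ℕ} {n : Type*} [Fintype n] (Y : Matrix n (Fin M) ℂ)
    (h : Function.Injective Y.mulVecLin) : Function.Surjective Yᵀ.mulVecLin := by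
  rw [← LinearMap.range_eq_top]
  have h1 : Y.rank = M := by
    rw [Matrix.rank, LinearMap.finrank_range_of_inj h, Module.finrank_fin_fun]
  have h2 : Yᵀ.rank = M := by rw [Matrix.rank_transpose]; exact h1
  apply Submodule.eq_top_of_finrank_eq
  rw [show Module.finrank ℂ ↥(LinearMap.range Yᵀ.mulVecLin) = Yᵀ.rank from rfl, h2,
    Module.finrank_fin_fun]

lemma rank_factor {M : ℕ} {m n : Type*} [Fintype m] [Fintype n]
    (X' : Matrix m (Fin M) ℂ) (Y : Matrix n (Fin M) ℂ) (g : Fin M → ℂ) (hg : ∀ j, g j ≠ 0)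
    (hX : Function.Injective X'.mulVecLin) (hY : Function.Injective Y.mulVecLin) :
    (X' * Matrix.diagonal g * Yᵀ).rank = M := by
  have hsurj := surj_transpose Y hY
  have hD : Function.Injective (Matrix.diagonal g).mulVecLin := by
    intro a b hab
    funext j
    have := congrFun hab j
    simp only [Matrix.mulVecLin_apply, Matrix.mulVec_diagonal] at this
    exact mul_left_cancel₀ (hg j) this
  rw [Matrix.rank, Matrix.mulVecLin_mul,
    LinearMap.range_comp_of_range_eq_top _ (LinearMap.range_eq_top.2 hsurj),
    Matrix.mulVecLin_mul]
  rw [LinearMap.finrank_range_of_inj (by rw [LinearMap.coe_comp]; exact hX.comp hD),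
    Module.finrank_fin_fun]

theorem loewner_hankel_factorization (M N : ℕ) (hMN : M < N)
    (γ z : Fin M → ℂ) (hγ : ∀ j, γ j ≠ 0) (hz0 : ∀ j, z j ≠ 0)
    (hzinj : Function.Injective z)
    (ω : ℂ) (hω : ω = Complex.exp (-(2 * Real.pi * Complex.I) / (2 * (N : ℂ))))
    (f fhat : ℕ → ℂ)
    (hf : ∀ k, f k = ∑ j, γ j * z j ^ k)
    (hfhat : ∀ m, fhat m = ∑ ℓ ∈ Finset.range (2 * N), f ℓ * ω ^ (m * ℓ))
    (S Γ : Finset (Fin (2 * N))) (hdisj : Disjoint S Γ)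
    (hunion : S ∪ Γ = Finset.univ) (hScard : S.card = M + 1)
    (L : Matrix ↥Γ ↥S ℂ)
    (hL : ∀ ℓ k, L ℓ k
      = (ω ^ ℓ.1.1 * fhat ℓ.1.1 - ω ^ k.1.1 * fhat k.1.1) / (ω⁻¹ ^ ℓ.1.1 - ω⁻¹ ^ k.1.1))
    (H : Matrix (Fin (2 * N - M)) (Fin (M + 1)) ℂ)
    (hH : ∀ ℓ k, H ℓ k = f ((ℓ : ℕ) + (k : ℕ)))
    (Q1 : Matrix ↥Γ (Fin (2 * N - M)) ℂ)
    (hQ1 : ∀ ℓ r, Q1 ℓ r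
      = (∏ n ∈ Finset.univ.erase ℓ, (Polynomial.X - Polynomial.C (ω⁻¹ ^ n.1.1))).coeff (r : ℕ))
    (Q2 : Matrix ↥S (Fin (M + 1)) ℂ)
    (hQ2 : ∀ k r, Q2 k r
      = (∏ n ∈ Finset.univ.erase k, (Polynomial.X - Polynomial.C (ω⁻¹ ^ n.1.1))).coeff (r : ℕ)) :
    L = Q1 * H * Q2ᵀ ∧ L.rank = M ∧ H.rank = M := by
  have hN2 : 0 < 2 * N := by omega
  have hprim : IsPrimitiveRoot ω⁻¹ (2 * N) := by
    have h := Complex.isPrimitiveRoot_exp (2 * N) (by omega)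
    have hinv : ω⁻¹ = Complex.exp (2 * Real.pi * Complex.I / (2 * (N : ℂ))) := by
      rw [hω, ← Complex.exp_neg, neg_div, neg_neg]
    rw [hinv]
    convert h using 3
    push_cast
    ring
  have huinj : Function.Injective (fun n : Fin (2 * N) => ω⁻¹ ^ (n : ℕ)) := by
    intro a b h
    exact Fin.ext (hprim.pow_inj a.2 b.2 h)
  have hω2N : ω ^ (2 * N) = 1 := by
    have h := hprim.pow_eq_one
    rwa [inv_pow, inv_eq_one] at h
  have hu1 : ∀ n : Fin (2 * N), (ω⁻¹ ^ (n : ℕ)) ^ (2 * N) = 1 := by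
    intro n
    rw [← pow_mul, mul_comm, pow_mul, hprim.pow_eq_one, one_pow]
  have hexp : ∀ (m t : ℕ), t < 2 * N → (ω⁻¹ ^ m) ^ (2 * N - 1 - t) = ω ^ (m * (t + 1)) := by
    intro m t ht
    have hsum : m * (2 * N - 1 - t) + m * (t + 1) = m * (2 * N) := by
      rw [← Nat.mul_add]
      congr 1
      omega
    have h1 : ω ^ (m * (2 * N - 1 - t)) * ω ^ (m * (t + 1)) = 1 := by
      rw [← pow_add, hsum, mul_comm m, pow_mul, hω2N, one_pow]
    rw [← pow_mul, inv_pow]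
    exact inv_eq_of_mul_eq_one_right h1
  have hcards : S.card + Γ.card = 2 * N := by
    rw [← Finset.card_union_of_disjoint hdisj, hunion, Finset.card_univ, Fintype.card_fin]
  have hΓcard : Γ.card = 2 * N - (M + 1) := by omega
  have himg : Polynomial.nthRootsFinset (2 * N) (1 : ℂ)
      = Finset.image (fun i : Fin (2 * N) => ω⁻¹ ^ (i : ℕ)) Finset.univ := by
    symm
    apply Finset.eq_of_subset_of_card_le
    · intro x hx
      rw [Finset.mem_image] at hx
      obtain ⟨i, _, rfl⟩ := hx
      exact (Polynomial.mem_nthRootsFinset hN2 (1 : ℂ)).2 (hu1 i)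
    · rw [Finset.card_image_of_injective _ huinj, Finset.card_univ, Fintype.card_fin,
        hprim.card_nthRootsFinset]
  have hprodU : (∏ n ∈ S, (X - C (ω⁻¹ ^ (n : ℕ)))) * ∏ n ∈ Γ, (X - C (ω⁻¹ ^ (n : ℕ)))
      = X ^ (2 * N) - 1 := by
    rw [← Finset.prod_union hdisj, hunion, X_pow_sub_one_eq_prod hN2 hprim, himg,
      Finset.prod_image (fun a _ b _ h => huinj h)]
  set P1 : ↥Γ → ℂ[X] := fun ℓ => ∏ n ∈ Γ.erase ℓ.1, (X - C (ω⁻¹ ^ (n : ℕ))) with hP1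
  set P2 : ↥S → ℂ[X] := fun k => ∏ n ∈ S.erase k.1, (X - C (ω⁻¹ ^ (n : ℕ))) with hP2
  have hQ1' : ∀ ℓ r, Q1 ℓ r = (P1 ℓ).coeff (r : ℕ) := by
    intro ℓ r
    rw [hQ1, hP1]
    exact congrArg (fun p : ℂ[X] => p.coeff (r : ℕ))
      (prod_subtype_erase Γ ℓ (fun n => X - C (ω⁻¹ ^ (n : ℕ))))
  have hQ2' : ∀ k r, Q2 k r = (P2 k).coeff (r : ℕ) := by
    intro k r
    rw [hQ2, hP2]
    exact congrArg (fun p : ℂ[X] => p.coeff (r : ℕ))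
      (prod_subtype_erase S k (fun n => X - C (ω⁻¹ ^ (n : ℕ))))
  have hP1deg : ∀ ℓ, (P1 ℓ).natDegree < 2 * N - M := by
    intro ℓ
    rw [hP1]
    rw [natDegree_prod_X_sub_C' _ (fun n : Fin (2 * N) => ω⁻¹ ^ (n : ℕ)),
      Finset.card_erase_of_mem ℓ.2]
    omega
  have hP2deg : ∀ k, (P2 k).natDegree < M + 1 := by
    intro k
    rw [hP2]
    rw [natDegree_prod_X_sub_C' _ (fun n : Fin (2 * N) => ω⁻¹ ^ (n : ℕ)),
      Finset.card_erase_of_mem k.2, hScard]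
    omega
  set V1 : Matrix (Fin (2 * N - M)) (Fin M) ℂ :=
    Matrix.of (fun r j => z j ^ (r : ℕ)) with hV1
  set V2 : Matrix (Fin (M + 1)) (Fin M) ℂ :=
    Matrix.of (fun s j => z j ^ (s : ℕ)) with hV2
  have hHfact : H = V1 * Matrix.diagonal γ * V2ᵀ := by
    ext r s
    rw [hH, hf, Matrix.mul_apply]
    apply Finset.sum_congr rfl
    intro j _
    rw [Matrix.mul_diagonal, Matrix.transpose_apply, hV1, hV2]
    simp only [Matrix.of_apply]
    rw [pow_add]
    ring
  have hAeval : ∀ ℓ j, (Q1 * V1) ℓ j = (P1 ℓ).eval (z j) := by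
    intro ℓ j
    rw [Matrix.mul_apply, ← eval_fin_sum (P1 ℓ) (hP1deg ℓ) (z j)]
    apply Finset.sum_congr rfl
    intro r _
    rw [hQ1']
    rfl
  have hBeval : ∀ k j, (Q2 * V2) k j = (P2 k).eval (z j) := by
    intro k j
    rw [Matrix.mul_apply, ← eval_fin_sum (P2 k) (hP2deg k) (z j)]
    apply Finset.sum_congr rfl
    intro r _
    rw [hQ2']
    rfl
  have hfact : Q1 * H * Q2ᵀ = (Q1 * V1) * Matrix.diagonal γ * (Q2 * V2)ᵀ := by
    rw [hHfact, Matrix.transpose_mul]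
    simp only [Matrix.mul_assoc]
  have hentry : ∀ (ℓ : ↥Γ) (k : ↥S), ((Q1 * V1) * Matrix.diagonal γ * (Q2 * V2)ᵀ) ℓ k
      = ∑ j, γ j * ((P1 ℓ).eval (z j) * (P2 k).eval (z j)) := by
    intro ℓ k
    rw [Matrix.mul_apply]
    apply Finset.sum_congr rfl
    intro j _
    rw [Matrix.mul_diagonal, Matrix.transpose_apply, hAeval, hBeval]
    ring
  have hfinal : ∀ m : Fin (2 * N),
      (∑ t ∈ Finset.range (2 * N), f t * (ω⁻¹ ^ (m : ℕ)) ^ (2 * N - 1 - t))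
      = ω ^ (m : ℕ) * fhat (m : ℕ) := by
    intro m
    rw [hfhat, Finset.mul_sum]
    apply Finset.sum_congr rfl
    intro t ht
    rw [Finset.mem_range] at ht
    rw [hexp (m : ℕ) t ht, show (m : ℕ) * (t + 1) = (m : ℕ) * t + (m : ℕ) by ring, pow_add]
    ring
  have hswap : ∀ c : ℂ, (∑ j, γ j * ∑ t ∈ Finset.range (2 * N), z j ^ t * c ^ (2 * N - 1 - t))
      = ∑ t ∈ Finset.range (2 * N), f t * c ^ (2 * N - 1 - t) := by
    intro c
    simp_rw [hf, Finset.sum_mul, Finset.mul_sum]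
    rw [Finset.sum_comm]
    exact Finset.sum_congr rfl fun t _ => Finset.sum_congr rfl fun j _ => by ring
  have hcore : ∀ (ℓ : ↥Γ) (k : ↥S),
      (ω⁻¹ ^ (ℓ.1 : ℕ) - ω⁻¹ ^ (k.1 : ℕ))
        * (∑ j, γ j * ((P1 ℓ).eval (z j) * (P2 k).eval (z j)))
      = ω ^ (ℓ.1 : ℕ) * fhat ℓ.1 - ω ^ (k.1 : ℕ) * fhat k.1 := by
    intro ℓ k
    have hG : ∀ c : ℂ, c ^ (2 * N) = 1 →
        (∑ t ∈ Finset.range (2 * N), (X : ℂ[X]) ^ t * C c ^ (2 * N - 1 - t)) * (X - C c)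
          = X ^ (2 * N) - 1 := by
      intro c hc
      have h := geom_sum₂_mul (X : ℂ[X]) (C c) (2 * N)
      rwa [← map_pow, hc, Polynomial.C_1] at h
    have h3 : (P1 ℓ * (X - C (ω⁻¹ ^ (ℓ.1 : ℕ)))) * (P2 k * (X - C (ω⁻¹ ^ (k.1 : ℕ))))
        = X ^ (2 * N) - 1 := by
      rw [hP1, hP2]
      rw [Finset.prod_erase_mul Γ (fun n : Fin (2 * N) => X - C (ω⁻¹ ^ (n : ℕ))) ℓ.2,
        Finset.prod_erase_mul S (fun n : Fin (2 * N) => X - C (ω⁻¹ ^ (n : ℕ))) k.2,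
        mul_comm, hprodU]
    have hpoly : (C (ω⁻¹ ^ (ℓ.1 : ℕ)) - C (ω⁻¹ ^ (k.1 : ℕ))) * (P1 ℓ * P2 k)
        = (∑ t ∈ Finset.range (2 * N), (X : ℂ[X]) ^ t * C (ω⁻¹ ^ (ℓ.1 : ℕ)) ^ (2 * N - 1 - t))
          - (∑ t ∈ Finset.range (2 * N),
              (X : ℂ[X]) ^ t * C (ω⁻¹ ^ (k.1 : ℕ)) ^ (2 * N - 1 - t)) := by
      apply mul_left_cancel₀
        (mul_ne_zero (X_sub_C_ne_zero (ω⁻¹ ^ (ℓ.1 : ℕ))) (X_sub_C_ne_zero (ω⁻¹ ^ (k.1 : ℕ))))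
      linear_combination (C (ω⁻¹ ^ (ℓ.1 : ℕ)) - C (ω⁻¹ ^ (k.1 : ℕ))) * h3
        - (X - C (ω⁻¹ ^ (k.1 : ℕ))) * hG (ω⁻¹ ^ (ℓ.1 : ℕ)) (hu1 ℓ.1)
        + (X - C (ω⁻¹ ^ (ℓ.1 : ℕ))) * hG (ω⁻¹ ^ (k.1 : ℕ)) (hu1 k.1)
    have heval : ∀ x : ℂ,
        (ω⁻¹ ^ (ℓ.1 : ℕ) - ω⁻¹ ^ (k.1 : ℕ)) * ((P1 ℓ).eval x * (P2 k).eval x)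
        = (∑ t ∈ Finset.range (2 * N), x ^ t * (ω⁻¹ ^ (ℓ.1 : ℕ)) ^ (2 * N - 1 - t))
          - (∑ t ∈ Finset.range (2 * N), x ^ t * (ω⁻¹ ^ (k.1 : ℕ)) ^ (2 * N - 1 - t)) := by
      intro x
      have h := congrArg (Polynomial.eval x) hpoly
      simpa [Polynomial.eval_finset_sum] using h
    calc (ω⁻¹ ^ (ℓ.1 : ℕ) - ω⁻¹ ^ (k.1 : ℕ))
          * (∑ j, γ j * ((P1 ℓ).eval (z j) * (P2 k).eval (z j)))
        = ∑ j, γ j * ((ω⁻¹ ^ (ℓ.1 : ℕ) - ω⁻¹ ^ (k.1 : ℕ))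
            * ((P1 ℓ).eval (z j) * (P2 k).eval (z j))) := by
          rw [Finset.mul_sum]
          exact Finset.sum_congr rfl fun j _ => by ring
      _ = ∑ j, γ j * ((∑ t ∈ Finset.range (2 * N), z j ^ t * (ω⁻¹ ^ (ℓ.1 : ℕ)) ^ (2 * N - 1 - t))
            - ∑ t ∈ Finset.range (2 * N), z j ^ t * (ω⁻¹ ^ (k.1 : ℕ)) ^ (2 * N - 1 - t)) :=
          Finset.sum_congr rfl fun j _ => by rw [heval (z j)]
      _ = (∑ t ∈ Finset.range (2 * N), f t * (ω⁻¹ ^ (ℓ.1 : ℕ)) ^ (2 * N - 1 - t))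
            - ∑ t ∈ Finset.range (2 * N), f t * (ω⁻¹ ^ (k.1 : ℕ)) ^ (2 * N - 1 - t) := by
          simp_rw [mul_sub]
          rw [Finset.sum_sub_distrib, hswap, hswap]
      _ = ω ^ (ℓ.1 : ℕ) * fhat ℓ.1 - ω ^ (k.1 : ℕ) * fhat k.1 := by
          rw [hfinal ℓ.1, hfinal k.1]
  have hL1 : L = Q1 * H * Q2ᵀ := by
    ext ℓ k
    rw [hL, hfact, hentry]
    have hlk : (ℓ.1 : Fin (2 * N)) ≠ k.1 := by
      intro h
      exact Finset.disjoint_left.1 hdisj k.2 (h ▸ ℓ.2)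
    have hne : ω⁻¹ ^ (ℓ.1 : ℕ) - ω⁻¹ ^ (k.1 : ℕ) ≠ 0 := by
      apply sub_ne_zero.2
      intro h
      exact hlk (huinj h)
    rw [div_eq_iff hne, ← hcore ℓ k]
    ring
  have hAinj : Function.Injective (Q1 * V1).mulVecLin := by
    apply mulVecLin_injective_of_eval P1 z hzinj _ hAeval
    intro i
    rw [hP1]
    apply mem_span_prod_erase Γ (fun n : Fin (2 * N) => ω⁻¹ ^ (n : ℕ)) huinj.injOn
    have h1 : (∏ j ∈ Finset.univ.erase i, (X - C (z j))).natDegree < Γ.card := by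
      rw [natDegree_prod_X_sub_C', Finset.card_erase_of_mem (Finset.mem_univ i),
        Finset.card_univ, Fintype.card_fin, hΓcard]
      omega
    exact lt_of_le_of_lt Polynomial.degree_le_natDegree (by exact_mod_cast h1)
  have hBinj : Function.Injective (Q2 * V2).mulVecLin := by
    apply mulVecLin_injective_of_eval P2 z hzinj _ hBeval
    intro i
    rw [hP2]
    apply mem_span_prod_erase S (fun n : Fin (2 * N) => ω⁻¹ ^ (n : ℕ)) huinj.injOn
    have h1 : (∏ j ∈ Finset.univ.erase i, (X - C (z j))).natDegree < S.card := by
      rw [natDegree_prod_X_sub_C', Finset.card_erase_of_mem (Finset.mem_univ i),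
        Finset.card_univ, Fintype.card_fin, hScard]
      omega
    exact lt_of_le_of_lt Polynomial.degree_le_natDegree (by exact_mod_cast h1)
  have hV1inj : Function.Injective V1.mulVecLin := by
    apply mulVecLin_injective_of_eval (fun r : Fin (2 * N - M) => (X : ℂ[X]) ^ (r : ℕ)) z hzinj
    · intro i j
      rw [hV1]
      simp
    · intro i
      apply mem_span_monomials
      rw [natDegree_prod_X_sub_C', Finset.card_erase_of_mem (Finset.mem_univ i),
        Finset.card_univ, Fintype.card_fin]
      omega
  have hV2inj : Function.Injective V2.mulVecLin := by
    apply mulVecLin_injective_of_eval (fun s : Fin (M + 1) => (X : ℂ[X]) ^ (s : ℕ)) z hzinj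
    · intro i j
      rw [hV2]
      simp
    · intro i
      apply mem_span_monomials
      rw [natDegree_prod_X_sub_C', Finset.card_erase_of_mem (Finset.mem_univ i),
        Finset.card_univ, Fintype.card_fin]
      omega
  refine ⟨hL1, ?_, ?_⟩
  · rw [hL1, hfact]
    exact rank_factor _ _ γ hγ hAinj hBinj
  · rw [hHfact]
    exact rank_factor _ _ γ hγ hV1inj hV2inj
end

section
/- In the setting of the Hankel–Loewner factorization, with S ∪ Γ a partition of {0,...,2N-1}, |S| = M, u⁽¹⁾ = (ω^{-ℓ})_{ℓ∈Γ}, u⁽²⁾ = (ω^{-k})_{k∈S}: the shifted Loewner matrix L(1) := ((f̂_ℓ - f̂_k)/(ω^{-ℓ} - ω^{-k}))_{ℓ∈Γ,k∈S} satisfies L(1) = Q_{2N-M,2N-M}(u⁽¹⁾) · H(1) · Q_{M,M}(u⁽²⁾)^T, where H(1) = (f_{k+ℓ+1})_{ℓ=0..2N-M-1, k=0..M-1}. -/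
open Finset Matrix Polynomial

-- Lemma 1: full product over Fin n
lemma prod_roots_aux {ζ : ℂ} {n : ℕ} (hn : 0 < n) (h : IsPrimitiveRoot ζ n) :
    (X : ℂ[X]) ^ n - 1 = ∏ i : Fin n, (X - C (ζ ^ (i : ℕ))) := by
  have himg : Finset.image (fun i : Fin n => ζ ^ (i : ℕ)) Finset.univ
      = Polynomial.nthRootsFinset n (1 : ℂ) := by
    apply Finset.eq_of_subset_of_card_le
    · intro x hx
      simp only [Finset.mem_image] at hx
      obtain ⟨i, _, rfl⟩ := hx
      rw [Polynomial.mem_nthRootsFinset hn (1 : ℂ), ← pow_mul, mul_comm, pow_mul, h.pow_eq_one, one_pow]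
    · rw [h.card_nthRootsFinset, Finset.card_image_of_injective _ ?_, Finset.card_univ,
        Fintype.card_fin]
      intro i j hij
      exact Fin.ext (h.pow_inj i.2 j.2 hij)
  rw [Polynomial.X_pow_sub_one_eq_prod hn h, ← himg, Finset.prod_image]
  intro i _ j _ hij
  exact Fin.ext (h.pow_inj i.2 j.2 hij)

-- Lemma 2: subtype product to ambient product
lemma prod_subtype_erase_s11 {m : ℕ} {β : Type*} [CommMonoid β] (A : Finset (Fin m)) (a : ↥A)
    (h : Fin m → β) :
    ∏ n ∈ (Finset.univ : Finset ↥A).erase a, h n.1 = ∏ n ∈ A.erase a.1, h n := by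
  apply Finset.prod_bij (fun (n : ↥A) _ => n.1)
  · intro b hb
    rw [Finset.mem_erase] at hb ⊢
    exact ⟨fun e => hb.1 (Subtype.ext e), b.2⟩
  · intro b hb c hc hbc
    exact Subtype.ext hbc
  · intro b hb
    rw [Finset.mem_erase] at hb
    exact ⟨⟨b, hb.2⟩, Finset.mem_erase.mpr ⟨fun e => hb.1 (congrArg Subtype.val e), Finset.mem_univ _⟩, rfl⟩
  · intro b _
    rfl

-- Lemma 3: key geometric sum identity
lemma geom_eval {ω : ℂ} {n : ℕ} (hn : 0 < n) (hω : IsPrimitiveRoot ω n)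
    (a : Fin n) (z : ℂ) :
    ∑ t ∈ Finset.range n, z ^ t * ω ^ ((a : ℕ) * t)
      = ω⁻¹ ^ (a : ℕ) * ∏ i ∈ (Finset.univ : Finset (Fin n)).erase a, (z - ω⁻¹ ^ (i : ℕ)) := by
  have hζ : IsPrimitiveRoot ω⁻¹ n := hω.inv
  set b : ℂ := ω ^ (a : ℕ) with hb
  set c : ℂ := ω⁻¹ ^ (a : ℕ) with hc
  have hbc : b * c = 1 := by
    rw [hb, hc, ← mul_pow, mul_inv_cancel₀ (hω.ne_zero hn.ne'), one_pow]
  set P : ℂ[X] := ∑ t ∈ Finset.range n, (C b * X) ^ t with hP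
  have key : P * (C b * X - 1) = (X : ℂ[X]) ^ n - 1 := by
    rw [geom_sum_mul, mul_pow, ← C_pow, hb, ← pow_mul, mul_comm (a : ℕ) n, pow_mul,
      hω.pow_eq_one, one_pow, C_1, one_mul]
  have hfac : C b * X - 1 = C b * (X - C c) := by
    rw [mul_sub, ← C_mul, hbc, C_1]
  have hprod : (X : ℂ[X]) ^ n - 1
      = (X - C c) * ∏ i ∈ (Finset.univ : Finset (Fin n)).erase a, (X - C (ω⁻¹ ^ (i : ℕ))) := by
    rw [prod_roots_aux hn hζ, ← Finset.mul_prod_erase _ _ (Finset.mem_univ a)]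
  have hcancel : C b * P = ∏ i ∈ (Finset.univ : Finset (Fin n)).erase a,
      (X - C (ω⁻¹ ^ (i : ℕ))) := by
    apply mul_left_cancel₀ (X_sub_C_ne_zero c)
    rw [← hprod, ← key, hfac]; ring
  have hPe : P = C c * ∏ i ∈ (Finset.univ : Finset (Fin n)).erase a,
      (X - C (ω⁻¹ ^ (i : ℕ))) := by
    rw [← hcancel, ← mul_assoc, ← C_mul, mul_comm c b, hbc, C_1, one_mul]
  have := congrArg (fun p : ℂ[X] => p.eval z) hPe
  simp only [hP, eval_finset_sum, eval_pow, eval_mul, eval_C, eval_X, eval_prod, eval_sub] at this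
  calc ∑ t ∈ Finset.range n, z ^ t * ω ^ ((a : ℕ) * t)
      = ∑ t ∈ Finset.range n, (b * z) ^ t := by
        refine Finset.sum_congr rfl fun t _ => ?_
        rw [mul_pow, hb, ← pow_mul, mul_comm]
    _ = _ := by rw [← this]

theorem shifted_loewner_hankel_factorization (M N : ℕ) (hMN : M < N)
    (γ z : Fin M → ℂ) (hγ : ∀ j, γ j ≠ 0) (hz0 : ∀ j, z j ≠ 0)
    (hzinj : Function.Injective z)
    (ω : ℂ) (hω : ω = Complex.exp (-(2 * Real.pi * Complex.I) / (2 * (N : ℂ))))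
    (f fhat : ℕ → ℂ)
    (hf : ∀ k, f k = ∑ j, γ j * z j ^ k)
    (hfhat : ∀ m, fhat m = ∑ ℓ ∈ Finset.range (2 * N), f ℓ * ω ^ (m * ℓ))
    (S Γ : Finset (Fin (2 * N))) (hdisj : Disjoint S Γ)
    (hunion : S ∪ Γ = Finset.univ) (hScard : S.card = M)
    (L1 : Matrix ↥Γ ↥S ℂ)
    (hL1 : ∀ ℓ k, L1 ℓ k = (fhat ℓ.1.1 - fhat k.1.1) / (ω⁻¹ ^ ℓ.1.1 - ω⁻¹ ^ k.1.1))
    (H1 : Matrix (Fin (2 * N - M)) (Fin M) ℂ)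
    (hH1 : ∀ ℓ k, H1 ℓ k = f ((k : ℕ) + (ℓ : ℕ) + 1))
    (Q1 : Matrix ↥Γ (Fin (2 * N - M)) ℂ)
    (hQ1 : ∀ ℓ r, Q1 ℓ r
      = (∏ n ∈ Finset.univ.erase ℓ, (Polynomial.X - Polynomial.C (ω⁻¹ ^ n.1.1))).coeff (r : ℕ))
    (Q2 : Matrix ↥S (Fin M) ℂ)
    (hQ2 : ∀ k r, Q2 k r
      = (∏ n ∈ Finset.univ.erase k, (Polynomial.X - Polynomial.C (ω⁻¹ ^ n.1.1))).coeff (r : ℕ)) :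
    L1 = Q1 * H1 * Q2ᵀ := by
  have h2N : 0 < 2 * N := by omega
  have hωprim : IsPrimitiveRoot ω (2 * N) := by
    have h1 := Complex.isPrimitiveRoot_exp (2 * N) (by omega)
    have h2 : ω = (Complex.exp (2 * Real.pi * Complex.I / ((2 * N : ℕ) : ℂ)))⁻¹ := by
      rw [hω, ← Complex.exp_neg, neg_div]
      congr 2
      push_cast
      ring
    rw [h2]
    exact h1.inv
  have hζprim : IsPrimitiveRoot ω⁻¹ (2 * N) := hωprim.inv
  have hcards : S.card + Γ.card = 2 * N := by
    rw [← Finset.card_union_of_disjoint hdisj, hunion, Finset.card_univ, Fintype.card_fin]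
  have hΓcard : Γ.card = 2 * N - M := by omega
  have hSmem : ∀ i : Fin (2 * N), i ∈ S ∨ i ∈ Γ := fun i => by
    have h := Finset.mem_univ i
    rw [← hunion, Finset.mem_union] at h
    exact h
  ext ℓ k
  set p : ℂ[X] := ∏ n ∈ Finset.univ.erase ℓ, (X - C (ω⁻¹ ^ n.1.1)) with hp
  set q : ℂ[X] := ∏ n ∈ Finset.univ.erase k, (X - C (ω⁻¹ ^ n.1.1)) with hq
  have hpdeg : p.natDegree < 2 * N - M := by
    rw [hp, Polynomial.natDegree_prod_of_monic _ _ (fun i _ => monic_X_sub_C _)]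
    simp only [natDegree_X_sub_C, Finset.sum_const, smul_eq_mul, mul_one,
      Finset.card_erase_of_mem (Finset.mem_univ ℓ), Finset.card_univ, Fintype.card_coe]
    omega
  have hqdeg : q.natDegree < M := by
    have hM : 0 < M := by
      rw [← hScard]
      exact Finset.card_pos.mpr ⟨k.1, k.2⟩
    rw [hq, Polynomial.natDegree_prod_of_monic _ _ (fun i _ => monic_X_sub_C _)]
    simp only [natDegree_X_sub_C, Finset.sum_const, smul_eq_mul, mul_one,
      Finset.card_erase_of_mem (Finset.mem_univ k), Finset.card_univ, Fintype.card_coe]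
    omega
  have hpeval : ∀ x : ℂ, ∑ r : Fin (2 * N - M), p.coeff (r : ℕ) * x ^ (r : ℕ) = p.eval x := by
    intro x
    rw [Polynomial.eval_eq_sum_range' hpdeg,
      Fin.sum_univ_eq_sum_range (fun i => p.coeff i * x ^ i)]
  have hqeval : ∀ x : ℂ, ∑ s : Fin M, q.coeff (s : ℕ) * x ^ (s : ℕ) = q.eval x := by
    intro x
    rw [Polynomial.eval_eq_sum_range' hqdeg,
      Fin.sum_univ_eq_sum_range (fun i => q.coeff i * x ^ i)]
  -- RHS computation
  have hRHS : (Q1 * H1 * Q2ᵀ) ℓ k = ∑ j, γ j * z j * p.eval (z j) * q.eval (z j) := by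
    simp only [Matrix.mul_apply, Matrix.transpose_apply]
    have e1 : ∀ j, γ j * z j * p.eval (z j) * q.eval (z j)
        = ∑ s : Fin M, ∑ r : Fin (2 * N - M),
            γ j * z j * (p.coeff (r : ℕ) * z j ^ (r : ℕ)) * (q.coeff (s : ℕ) * z j ^ (s : ℕ)) := by
      intro j
      rw [← hpeval (z j), ← hqeval (z j), Finset.mul_sum]
      refine Finset.sum_congr rfl fun s _ => ?_
      rw [Finset.mul_sum, Finset.sum_mul]
    rw [Finset.sum_congr rfl fun j (_ : j ∈ Finset.univ) => e1 j, Finset.sum_comm]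
    refine Finset.sum_congr rfl fun s _ => ?_
    rw [Finset.sum_mul, Finset.sum_comm]
    refine Finset.sum_congr rfl fun r _ => ?_
    rw [hQ1, hQ2, hH1, hf, Finset.mul_sum, Finset.sum_mul]
    refine Finset.sum_congr rfl fun j _ => ?_
    simp only [hp, hq]
    rw [pow_add, pow_add, pow_one]
    ring
  -- LHS computation
  have hℓk : (ℓ.1 : Fin (2 * N)) ≠ k.1 := by
    intro h
    exact (Finset.disjoint_left.mp hdisj k.2) (h ▸ ℓ.2)
  have hne : ω⁻¹ ^ (ℓ.1 : ℕ) ≠ ω⁻¹ ^ (k.1 : ℕ) := fun h =>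
    hℓk (Fin.ext (hζprim.pow_inj ℓ.1.isLt k.1.isLt h))
  have hdisj' : Disjoint (Γ.erase ℓ.1) (S.erase k.1) :=
    (hdisj.symm).mono (Finset.erase_subset _ _) (Finset.erase_subset _ _)
  have hsets : (((Finset.univ : Finset (Fin (2 * N))).erase ℓ.1).erase k.1)
      = (Γ.erase ℓ.1) ∪ (S.erase k.1) := by
    ext i
    simp only [Finset.mem_erase, Finset.mem_union, Finset.mem_univ, and_true]
    constructor
    · rintro ⟨hik, hiℓ⟩
      rcases hSmem i with h | h
      · exact Or.inr ⟨hik, h⟩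
      · exact Or.inl ⟨hiℓ, h⟩
    · rintro (⟨hiℓ, hi⟩ | ⟨hik, hi⟩)
      · exact ⟨fun e => (Finset.disjoint_left.mp hdisj k.2) (e ▸ hi), hiℓ⟩
      · exact ⟨hik, fun e => (Finset.disjoint_left.mp hdisj hi) (e ▸ ℓ.2)⟩
  have hR : ∀ x : ℂ, ∏ i ∈ (((Finset.univ : Finset (Fin (2 * N))).erase ℓ.1).erase k.1),
      (x - ω⁻¹ ^ (i : ℕ)) = p.eval x * q.eval x := by
    intro x
    rw [hsets, Finset.prod_union hdisj', hp, hq, eval_prod, eval_prod]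
    simp only [eval_sub, eval_X, eval_C]
    rw [prod_subtype_erase_s11 Γ ℓ (fun n => x - ω⁻¹ ^ (n : ℕ)),
      prod_subtype_erase_s11 S k (fun n => x - ω⁻¹ ^ (n : ℕ))]
  have hkey : ∀ x : ℂ,
      (∑ t ∈ Finset.range (2 * N), x ^ t * ω ^ ((ℓ.1 : ℕ) * t))
        - (∑ t ∈ Finset.range (2 * N), x ^ t * ω ^ ((k.1 : ℕ) * t))
      = (ω⁻¹ ^ (ℓ.1 : ℕ) - ω⁻¹ ^ (k.1 : ℕ)) * (x * (p.eval x * q.eval x)) := by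
    intro x
    rw [geom_eval h2N hωprim ℓ.1 x, geom_eval h2N hωprim k.1 x, ← hR x]
    have h1 : ∏ i ∈ (Finset.univ : Finset (Fin (2 * N))).erase ℓ.1, (x - ω⁻¹ ^ (i : ℕ))
        = (x - ω⁻¹ ^ (k.1 : ℕ)) * ∏ i ∈ (((Finset.univ : Finset (Fin (2 * N))).erase ℓ.1).erase k.1),
            (x - ω⁻¹ ^ (i : ℕ)) :=
      (Finset.mul_prod_erase _ _ (Finset.mem_erase.mpr ⟨fun e => hℓk e.symm, Finset.mem_univ _⟩)).symm
    have h2 : ∏ i ∈ (Finset.univ : Finset (Fin (2 * N))).erase k.1, (x - ω⁻¹ ^ (i : ℕ))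
        = (x - ω⁻¹ ^ (ℓ.1 : ℕ)) * ∏ i ∈ (((Finset.univ : Finset (Fin (2 * N))).erase k.1).erase ℓ.1),
            (x - ω⁻¹ ^ (i : ℕ)) :=
      (Finset.mul_prod_erase _ _ (Finset.mem_erase.mpr ⟨hℓk, Finset.mem_univ _⟩)).symm
    have h3 : (((Finset.univ : Finset (Fin (2 * N))).erase k.1).erase ℓ.1)
        = (((Finset.univ : Finset (Fin (2 * N))).erase ℓ.1).erase k.1) := by
      rw [Finset.erase_right_comm]
    rw [h1, h2, h3]
    ring
  have hLHS : L1 ℓ k = ∑ j, γ j * z j * p.eval (z j) * q.eval (z j) := by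
    rw [hL1]
    have hnum : fhat ℓ.1.1 - fhat k.1.1
        = (ω⁻¹ ^ ℓ.1.1 - ω⁻¹ ^ k.1.1) * ∑ j, γ j * z j * p.eval (z j) * q.eval (z j) := by
      rw [hfhat, hfhat, ← Finset.sum_sub_distrib]
      calc ∑ t ∈ Finset.range (2 * N), (f t * ω ^ (ℓ.1.1 * t) - f t * ω ^ (k.1.1 * t))
          = ∑ t ∈ Finset.range (2 * N), ∑ j,
              (γ j * (z j ^ t * ω ^ (ℓ.1.1 * t)) - γ j * (z j ^ t * ω ^ (k.1.1 * t))) := by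
            refine Finset.sum_congr rfl fun t _ => ?_
            rw [hf, Finset.sum_mul, Finset.sum_mul, ← Finset.sum_sub_distrib]
            refine Finset.sum_congr rfl fun j _ => ?_
            ring
        _ = ∑ j, γ j * ((∑ t ∈ Finset.range (2 * N), z j ^ t * ω ^ (ℓ.1.1 * t))
              - (∑ t ∈ Finset.range (2 * N), z j ^ t * ω ^ (k.1.1 * t))) := by
            rw [Finset.sum_comm]
            refine Finset.sum_congr rfl fun j _ => ?_
            rw [mul_sub, Finset.mul_sum, Finset.mul_sum, ← Finset.sum_sub_distrib]
        _ = ∑ j, γ j * ((ω⁻¹ ^ ℓ.1.1 - ω⁻¹ ^ k.1.1) * (z j * (p.eval (z j) * q.eval (z j)))) := by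
            refine Finset.sum_congr rfl fun j _ => ?_
            rw [hkey (z j)]
        _ = (ω⁻¹ ^ ℓ.1.1 - ω⁻¹ ^ k.1.1) * ∑ j, γ j * z j * p.eval (z j) * q.eval (z j) := by
            rw [Finset.mul_sum]
            refine Finset.sum_congr rfl fun j _ => ?_
            ring
    rw [hnum, mul_div_cancel_left₀ _ (sub_ne_zero.mpr hne)]
  rw [hLHS, hRHS]
end

section
/- The Hankel matrix pencil z·H(0) - H(1), where H(0) = (f_{k+ℓ})_{ℓ=0..2N-L-1,k=0..L-1} and H(1) = (f_{k+ℓ+1})_{ℓ=0..2N-L-1,k=0..L-1} with f_k = Σ_{j=1}^M γ_j z_j^k (M ≤ L ≤ N, γ_j ≠ 0, z_j pairwise distinct nonzero), has the property that for each j, rank(z_j·H(0) - H(1)) = M - 1, i.e., each z_j is a generalized eigenvalue of the pencil. -/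
open Finset Matrix

theorem hankel_pencil_eigenvalues (M N L : ℕ) (hML : M ≤ L) (hLN : L ≤ N)
    (γ z : Fin M → ℂ) (hγ : ∀ j, γ j ≠ 0) (hz0 : ∀ j, z j ≠ 0)
    (hzinj : Function.Injective z)
    (f : ℕ → ℂ) (hf : ∀ k, f k = ∑ j, γ j * z j ^ k)
    (H0 H1 : Matrix (Fin (2 * N - L)) (Fin L) ℂ)
    (hH0 : ∀ ℓ k, H0 ℓ k = f ((k : ℕ) + (ℓ : ℕ)))
    (hH1 : ∀ ℓ k, H1 ℓ k = f ((k : ℕ) + (ℓ : ℕ) + 1)) :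
    ∀ j, (z j • H0 - H1).rank = M - 1 := by
  intro j
  have hM2 : M ≤ 2 * N - L := by omega
  set V : Matrix (Fin (2 * N - L)) (Fin M) ℂ := fun ℓ m => z m ^ (ℓ : ℕ) with hV
  set W : Matrix (Fin L) (Fin M) ℂ := fun i m => z m ^ (i : ℕ) with hW
  set d : Fin M → ℂ := fun m => (z j - z m) * γ m with hd
  set E : Matrix (Fin (2 * N - L)) (Fin L) ℂ := z j • H0 - H1 with hE
  -- factorization
  have hfact : E = V * Matrix.diagonal d * Wᵀ := by
    ext ℓ k
    have hrhs : (V * Matrix.diagonal d * Wᵀ) ℓ k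
        = ∑ m, z m ^ (ℓ : ℕ) * d m * z m ^ (k : ℕ) := by
      simp only [Matrix.mul_apply, Matrix.diagonal_apply, Matrix.transpose_apply]
      simp [Matrix.mul_apply, Matrix.diagonal_apply, mul_ite, mul_zero, ite_mul, zero_mul,
        Finset.sum_ite_eq, Finset.sum_ite_eq', hV, hW]
    rw [hrhs]
    simp only [hE, Matrix.sub_apply, Matrix.smul_apply, smul_eq_mul, hH0, hH1, hf]
    rw [Finset.mul_sum, ← Finset.sum_sub_distrib]
    refine Finset.sum_congr rfl fun m _ => ?_
    simp only [hd, pow_add, pow_succ]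
    ring
  -- square Vandermonde-type matrix
  set A : Matrix (Fin M) (Fin M) ℂ := (Matrix.vandermonde z)ᵀ with hA
  have hAdet : IsUnit A.det := by
    rw [hA, Matrix.det_transpose, Matrix.det_vandermonde]
    refine isUnit_iff_ne_zero.2 (Finset.prod_ne_zero_iff.2 fun i _ =>
      Finset.prod_ne_zero_iff.2 fun k hk => ?_)
    rw [Finset.mem_Ioi] at hk
    exact sub_ne_zero.2 fun h => hk.ne' (hzinj h)
  -- selection matrices
  set P : Matrix (Fin M) (Fin (2 * N - L)) ℂ :=
    fun i ℓ => if ℓ = Fin.castLE hM2 i then 1 else 0 with hP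
  set Q : Matrix (Fin L) (Fin M) ℂ :=
    fun i m => if i = Fin.castLE hML m then 1 else 0 with hQ
  have hPV : P * V = A := by
    ext i k
    simp only [Matrix.mul_apply]
    simp only [hP, Matrix.mul_apply, ite_mul, one_mul, zero_mul,
      Finset.sum_ite_eq, Finset.mem_univ, if_true]
    simp [hV, hA, Matrix.vandermonde]
  have hWQ : Wᵀ * Q = Aᵀ := by
    ext k m
    simp only [Matrix.mul_apply, Matrix.transpose_apply]
    simp only [hQ, Matrix.mul_apply, mul_ite, mul_one, mul_zero,
      Finset.sum_ite_eq', Finset.mem_univ, if_true]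
    simp [hW, hA, Matrix.vandermonde]
  have hAdet' : IsUnit Aᵀ.det := by rwa [Matrix.det_transpose]
  -- rank E ≤ rank D
  have h1 : E.rank ≤ (Matrix.diagonal d).rank := by
    rw [hfact]
    exact le_trans (Matrix.rank_mul_le_left _ _) (Matrix.rank_mul_le_right _ _)
  -- D = A⁻¹ * P * E * Q * Aᵀ⁻¹
  have hDrec : Matrix.diagonal d = A⁻¹ * P * E * (Q * Aᵀ⁻¹) := by
    have : A⁻¹ * P * E * (Q * Aᵀ⁻¹)
        = A⁻¹ * (P * V) * Matrix.diagonal d * (Wᵀ * Q) * Aᵀ⁻¹ := by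
      rw [hfact]; simp only [Matrix.mul_assoc]
    rw [this, hPV, hWQ, Matrix.nonsing_inv_mul _ hAdet, Matrix.one_mul,
      Matrix.mul_assoc, Matrix.mul_nonsing_inv _ hAdet', Matrix.mul_one]
  have h2 : (Matrix.diagonal d).rank ≤ E.rank := by
    rw [hDrec]
    exact le_trans (Matrix.rank_mul_le_left _ _) (Matrix.rank_mul_le_right _ _)
  have hrank : E.rank = (Matrix.diagonal d).rank := le_antisymm h1 h2
  rw [hrank, Matrix.rank_diagonal]
  -- count nonzero entries of d
  have hcard : (Finset.univ.filter fun m => d m ≠ 0) = Finset.univ \ {j} := by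
    ext m
    simp only [Finset.mem_filter, Finset.mem_univ, true_and, Finset.mem_sdiff,
      Finset.mem_singleton, hd, mul_ne_zero_iff, sub_ne_zero]
    constructor
    · rintro ⟨h, _⟩ rfl; exact h rfl
    · intro h; exact ⟨fun he => h (hzinj he.symm), hγ m⟩
  rw [Fintype.card_subtype, hcard, Finset.card_sdiff_of_subset (by simp)]
  simp
end
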